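/- Protocol 2 correctness: If (α, β) is distributed as a dd'-box given inputs (X,Y), then a = α mod d and b = β mod d are distributed as a d-box given (X,Y): p(ab|XY) = 1/d if (b − a) mod d = X·Y and 0 otherwise. -/

import Mathlib

/-- The `d`-box: `p(αβ|XY) = 1/d` if `(β − α) mod d = X·Y`, else `0`. -/
noncomputable def dBox (d : ℕ) : Fin 2 → Fin 2 → Fin d → Fin d → ℝ :=
  fun X Y α β => if (β.val + (d - α.val)) % d = X.val * Y.val then 1 / d else 0

/-- The output distribution of Protocol 2: sample `(α,β)` from a `dd'`-box
and output `a = α mod d`, `b = β mod d`. -/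
noncomputable def protocol2 (d d' : ℕ) :
    Fin 2 → Fin 2 → Fin d → Fin d → ℝ :=
  fun X Y a b =>
    ∑ α : Fin (d * d'), ∑ β : Fin (d * d'),
      dBox (d * d') X Y α β *
      (if a.val = α.val % d ∧ b.val = β.val % d then 1 else 0)

lemma sub_mod_iff (n e a b : ℕ) (he : e < n) (ha : a < n) (hb : b < n) :
    (b + (n - a)) % n = e ↔ b = (a + e) % n := by
  constructor
  · intro h
    have h2 : (b + (n - a) + a) % n = (e + a) % n := by
      rw [Nat.add_mod, h, Nat.add_mod_mod]
    have h3 : b + (n - a) + a = b + n := by omega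
    rw [h3, Nat.add_mod_right, Nat.mod_eq_of_lt hb] at h2
    rw [h2, Nat.add_comm]
  · intro h
    subst h
    rw [Nat.mod_add_mod]
    have h4 : a + e + (n - a) = e + n := by omega
    rw [h4, Nat.add_mod_right, Nat.mod_eq_of_lt he]

/-- Protocol 2 correctness: if `(α,β)` is distributed as a
`dd'`-box given `(X,Y)`, then `a = α mod d`, `b = β mod d` are distributed as
a `d`-box given `(X,Y)`. -/
theorem protocol2_correct (d d' : ℕ) (hd : 2 ≤ d) (hd' : 2 ≤ d') :
    ∀ (X Y : Fin 2) (a b : Fin d),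
      protocol2 d d' X Y a b = dBox d X Y a b := by
  intro X Y a b
  have hn : 0 < d * d' := by positivity
  have hXY : X.val * Y.val ≤ 1 := by
    calc X.val * Y.val ≤ 1 * 1 := Nat.mul_le_mul (by omega) (by omega)
    _ = 1 := by norm_num
  have he : X.val * Y.val < d := by omega
  have hen : X.val * Y.val < d * d' := lt_of_lt_of_le he (Nat.le_mul_of_pos_right d (by omega))
  set e := X.val * Y.val with he_def
  unfold protocol2 dBox
  have step1 : ∀ α : Fin (d * d'),
      (∑ β : Fin (d * d'),
        (if (β.val + (d * d' - α.val)) % (d * d') = e then (1:ℝ) / ((d * d' : ℕ) : ℝ) else 0) *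
        (if a.val = α.val % d ∧ b.val = β.val % d then 1 else 0))
      = if a.val = α.val % d ∧ b.val = (α.val + e) % d
          then (1:ℝ) / ((d * d' : ℕ) : ℝ) else 0 := by
    intro α
    have hb0 : (α.val + e) % (d * d') < d * d' := Nat.mod_lt _ hn
    rw [Finset.sum_eq_single (⟨(α.val + e) % (d * d'), hb0⟩ : Fin (d * d'))]
    · simp only
      rw [if_pos ((sub_mod_iff (d * d') e α.val _ hen α.isLt hb0).mpr rfl)]
      rw [Nat.mod_mod_of_dvd _ ⟨d', rfl⟩]
      split_ifs <;> simp
    · intro β _ hne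
      rw [if_neg, zero_mul]
      intro h
      exact hne (Fin.ext ((sub_mod_iff (d * d') e α.val β.val hen α.isLt β.isLt).mp h))
    · intro h; exact absurd (Finset.mem_univ _) h
  rw [Finset.sum_congr rfl (fun α _ => step1 α)]
  let E : Fin d' × Fin d ≃ Fin (d * d') :=
    finProdFinEquiv.trans (finCongr (Nat.mul_comm d' d))
  rw [← Equiv.sum_comp E, Fintype.sum_prod_type]
  have hEval : ∀ (j : Fin d') (i : Fin d), (E (j, i)).val = i.val + d * j.val := by
    intro j i; rfl
  have hmod : ∀ (j : Fin d') (i : Fin d), (E (j, i)).val % d = i.val := by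
    intro j i
    rw [hEval, Nat.add_mul_mod_self_left, Nat.mod_eq_of_lt i.isLt]
  have hmod2 : ∀ (j : Fin d') (i : Fin d), ((E (j, i)).val + e) % d = (i.val + e) % d := by
    intro j i
    rw [hEval, show i.val + d * j.val + e = i.val + e + d * j.val by ring,
      Nat.add_mul_mod_self_left]
  simp_rw [hmod, hmod2]
  have step2 : ∀ j : Fin d',
      (∑ i : Fin d, if a.val = i.val ∧ b.val = (i.val + e) % d
          then (1:ℝ) / ((d * d' : ℕ) : ℝ) else 0)
      = if b.val = (a.val + e) % d then (1:ℝ) / ((d * d' : ℕ) : ℝ) else 0 := by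
    intro j
    rw [Finset.sum_eq_single a]
    · simp
    · intro i _ hne
      rw [if_neg]
      rintro ⟨h1, -⟩
      exact hne (Fin.ext h1.symm)
    · intro h; exact absurd (Finset.mem_univ _) h
  rw [Finset.sum_congr rfl (fun j _ => step2 j), Finset.sum_const, Finset.card_univ,
    Fintype.card_fin]
  have hcond : ((b.val + (d - a.val)) % d = e) ↔ (b.val = (a.val + e) % d) :=
    sub_mod_iff d e a.val b.val he a.isLt b.isLt
  by_cases hc : b.val = (a.val + e) % d
  · rw [if_pos hc, if_pos (hcond.mpr hc)]
    have hd0 : (d : ℝ) ≠ 0 := by positivity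
    have hd'0 : (d' : ℝ) ≠ 0 := by positivity
    push_cast
    field_simp
    rw [nsmul_eq_mul, one_div, ← mul_assoc, mul_inv_cancel₀ (mul_ne_zero hd0 hd'0)]
  · rw [if_neg hc, if_neg (fun h => hc (hcond.mp h)), smul_zero]
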